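/- Let A be a C*-algebra with closed essential ideal K, S a closed semiregular operator on A whose restriction to K is regular with z-transform z ∈ M(K) (meaning: ‖z‖≤1, (1-z*z)^{1/2}K dense in K, D(S|_K) = (1-z*z)^{1/2}K and S((1-z*z)^{1/2}k) = zk). Then for every a ∈ D(S) there exists c ∈ M(K) such that a = (1-z*z)^{1/2}c and Sa = zc; explicitly c = (1-z*z)^{1/2}a + z*(Sa). -/
import Mathlib


/-- A densely defined operator on a C*-subalgebra `A` of an ambient unital C*-algebra `M`
(playing the role of `M(K)`).  It is presented by a total function `toFun` whose
meaningful values are those on its domain `dom ⊆ A`, which is a dense right ideal of `A`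
on which the operator is `ℂ`-linear and right `A`-linear. -/
structure AmbientOp (M : Type*) [CStarAlgebra M] (A : Set M) where
  dom : Set M
  toFun : M → M
  dom_sub : dom ⊆ A
  maps_to : ∀ a ∈ dom, toFun a ∈ A
  dense_dom : ∀ a ∈ A, a ∈ closure dom
  zero_mem : (0 : M) ∈ dom
  add_mem : ∀ a ∈ dom, ∀ b ∈ dom, a + b ∈ dom
  smul_mem : ∀ (c : ℂ), ∀ a ∈ dom, c • a ∈ dom
  mul_mem : ∀ a ∈ dom, ∀ x ∈ A, a * x ∈ dom
  map_add' : ∀ a ∈ dom, ∀ b ∈ dom, toFun (a + b) = toFun a + toFun b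
  map_smul' : ∀ (c : ℂ), ∀ a ∈ dom, toFun (c • a) = c • toFun a
  map_mul' : ∀ a ∈ dom, ∀ x ∈ A, toFun (a * x) = toFun a * x

namespace AmbientOp

variable {M : Type*} [CStarAlgebra M] {A : Set M}

/-- The domain of the adjoint `S*`, relative to the algebra `A`. -/
def adjDom (S : AmbientOp M A) : Set M :=
  {a : M | a ∈ A ∧ ∃ c ∈ A, ∀ b ∈ S.dom, star a * S.toFun b = star c * b}

/-- `S` is semiregular if its adjoint is densely defined in `A`. -/
def Semiregular (S : AmbientOp M A) : Prop := ∀ a ∈ A, a ∈ closure S.adjDom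

/-- `S` is a closed operator if its graph is closed. -/
def IsClosedOp (S : AmbientOp M A) : Prop :=
  IsClosed {p : M × M | p.1 ∈ S.dom ∧ p.2 = S.toFun p.1}

open Classical in
/-- The value of the adjoint `S*` at `a` (junk value `0` off the adjoint domain). -/
noncomputable def adjFun (S : AmbientOp M A) (a : M) : M :=
  if h : ∃ c ∈ A, ∀ b ∈ S.dom, star a * S.toFun b = star c * b then h.choose else 0

/-- The domain of the double adjoint `S**`, relative to `A`. -/
def adjDom2 (S : AmbientOp M A) : Set M :=
  {a : M | a ∈ A ∧ ∃ c ∈ A, ∀ b ∈ S.adjDom, star a * S.adjFun b = star c * b}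

open Classical in
/-- The value of the double adjoint `S**` at `a`. -/
noncomputable def adjFun2 (S : AmbientOp M A) (a : M) : M :=
  if h : ∃ c ∈ A, ∀ b ∈ S.adjDom, star a * S.adjFun b = star c * b then h.choose else 0

end AmbientOp

/-- Let `K ⊆ A ⊆ M = M(K)` with `K` a closed essential ideal, and let `S` be a closed
semiregular operator on `A` whose restriction to `K` is regular with z-transform `z`.
Then every `a ∈ D(S)` satisfies `a = (1-z*z)^{1/2} c` and `S a = z c`, where
`c = (1-z*z)^{1/2} a + z* (S a) ∈ M(K)`. -/
theorem stmt_12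
    {M : Type*} [CStarAlgebra M] [PartialOrder M] [StarOrderedRing M]
    (A : NonUnitalStarSubalgebra ℂ M) (hAc : IsClosed (A : Set M))
    (K : TwoSidedIdeal M) (hKc : IsClosed (K : Set M))
    (hKstar : ∀ k ∈ K, star k ∈ K)
    (hKA : (K : Set M) ⊆ (A : Set M))
    (hKess : ∀ m : M, (∀ k ∈ K, m * k = 0) → m = 0)
    (S : AmbientOp M (A : Set M)) (hS : S.Semiregular) (hSc : S.IsClosedOp)
    (z : M) (hz : ‖z‖ ≤ 1)
    (hzdense : ∀ k ∈ K, k ∈ closure ((fun x => CFC.sqrt (1 - star z * z) * x) '' K))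
    (hzdom : S.dom ∩ (K : Set M) = (fun x => CFC.sqrt (1 - star z * z) * x) '' K)
    (hzact : ∀ k ∈ K, S.toFun (CFC.sqrt (1 - star z * z) * k) = z * k) :
    ∀ a ∈ S.dom, ∃ c : M,
      a = CFC.sqrt (1 - star z * z) * c ∧
      S.toFun a = z * c ∧
      c = CFC.sqrt (1 - star z * z) * a + star z * S.toFun a := by
  intro a ha
  set e : M := CFC.sqrt (1 - star z * z) with he
  have hnn : (0 : M) ≤ 1 - star z * z := by
    rw [sub_nonneg]
    rw [← CStarAlgebra.norm_le_one_iff_of_nonneg (star z * z) (star_mul_self_nonneg z)]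
    calc ‖star z * z‖ = ‖z‖ * ‖z‖ := CStarRing.norm_star_mul_self
      _ ≤ 1 * 1 := mul_le_mul hz hz (norm_nonneg z) zero_le_one
      _ = 1 := one_mul 1
  have hsq : e * e = 1 - star z * z := CFC.sqrt_mul_sqrt_self _ hnn
  set c : M := e * a + star z * S.toFun a with hc
  -- key: for each k ∈ K, a*k = e*k' and (S a)*k = z*k' with c*k = k'
  have key : ∀ k ∈ K, a * k = e * (c * k) ∧ S.toFun a * k = z * (c * k) := by
    intro k hk
    have hkA : k ∈ (A : Set M) := hKA hk
    have hmem : a * k ∈ S.dom ∩ (K : Set M) :=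
      ⟨S.mul_mem a ha k hkA, K.mul_mem_left a k hk⟩
    rw [hzdom] at hmem
    obtain ⟨k', hk', hk'eq⟩ := hmem
    have hak : a * k = e * k' := hk'eq.symm
    have hSak : S.toFun a * k = z * k' := by
      have h1 : S.toFun (a * k) = S.toFun a * k := S.map_mul' a ha k hkA
      have h2 : S.toFun (e * k') = z * k' := hzact k' hk'
      rw [← h1, hak, h2]
    have hck : c * k = k' := by
      calc c * k = e * (a * k) + star z * (S.toFun a * k) := by
            rw [hc, add_mul, mul_assoc, mul_assoc]
        _ = e * (e * k') + star z * (z * k') := by rw [hak, hSak]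
        _ = (e * e + star z * z) * k' := by rw [add_mul, mul_assoc, mul_assoc]
        _ = 1 * k' := by rw [hsq, sub_add_cancel]
        _ = k' := one_mul k'
    rw [hck]
    exact ⟨hak, hSak⟩
  refine ⟨c, ?_, ?_, rfl⟩
  · have : ∀ k ∈ K, (a - e * c) * k = 0 := by
      intro k hk
      have := (key k hk).1
      rw [sub_mul, sub_eq_zero, mul_assoc]
      exact this
    have := hKess _ this
    rw [sub_eq_zero] at this
    exact this
  · have : ∀ k ∈ K, (S.toFun a - z * c) * k = 0 := by
      intro k hk
      have := (key k hk).2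
      rw [sub_mul, sub_eq_zero, mul_assoc]
      exact this
    have := hKess _ this
    rw [sub_eq_zero] at this
    exact this
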